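/- Every strictly constraint MARO-efficient solution x (for some ε ∈ R^n and j) is strictly multi-scenario MARO-efficient for the lower set relation ≦^l. -/
import Mathlib

/-- External stability: any point of a compact set is dominated by an efficient point. -/
lemma maro_ext_stable {Y' : Type*} [TopologicalSpace Y'] {n : ℕ} {S : Set Y'}
    (hS : IsCompact S) (g : Y' → Fin n → ℝ) (hg : Continuous g) {y0 : Y'} (hy0 : y0 ∈ S) :
    ∃ ye ∈ S, g ye ≤ g y0 ∧ ¬ ∃ y' ∈ S, g y' ≤ g ye ∧ g y' ≠ g ye := by
  set T : Set Y' := S ∩ {y | g y ≤ g y0} with hT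
  have hTc : IsCompact T := by
    apply hS.inter_right
    have : {y | g y ≤ g y0} = ⋂ i, {y | g y i ≤ g y0 i} := by
      ext y; simp [Pi.le_def, Set.mem_iInter]
    rw [this]
    exact isClosed_iInter fun i => isClosed_le ((continuous_apply i).comp hg) continuous_const
  have hTne : T.Nonempty := ⟨y0, hy0, le_refl (g y0)⟩
  have hh : ContinuousOn (fun y => ∑ i, g y i) T :=
    (continuous_finset_sum _ fun i _ => (continuous_apply i).comp hg).continuousOn
  obtain ⟨ye, hyeT, hmin⟩ := hTc.exists_isMinOn hTne hh
  refine ⟨ye, hyeT.1, hyeT.2, ?_⟩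
  rintro ⟨y', hy'S, hle, hne⟩
  have hy'T : y' ∈ T := ⟨hy'S, hle.trans hyeT.2⟩
  have hsum : ∑ i, g y' i < ∑ i, g ye i := by
    obtain ⟨i, hi⟩ := Function.ne_iff.mp hne
    exact Finset.sum_lt_sum (fun i _ => hle i) ⟨i, Finset.mem_univ i, lt_of_le_of_ne (hle i) hi⟩
  exact absurd (hmin hy'T) (not_le.mpr hsum)

/-- Every strictly constraint MARO-efficient solution `x` (for some `ε` and `j`) is strictly
multi-scenario MARO-efficient for the lower set relation `≦^l` (on the images of the inner
efficient sets): there is no `x' ∈ X \ {x}` such that for all `u ∈ U`, every point of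
`f(x,u,Y(x,u)_E)` is componentwise dominated by some point of `f(x',u,Y(x',u)_E)`. -/
theorem strictly_constraint_implies_strictly_multi_scenario_lower
    {X' U' Y' : Type*} [TopologicalSpace X'] [TopologicalSpace U'] [TopologicalSpace Y']
    (n : ℕ)
    (X : Set X') (U : Set U') (Y : X' → U' → Set Y')
    (f : X' → U' → Y' → Fin n → ℝ)
    (hf : Continuous fun p : X' × U' × Y' => f p.1 p.2.1 p.2.2)
    (hX : IsCompact X) (hU : IsCompact U) (hUne : U.Nonempty)
    (hY : ∀ x u, IsCompact (Y x u)) (hYne : ∀ x u, (Y x u).Nonempty)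
    -- the efficient set of the inner multicriteria problem
    (YE : X' → U' → Set Y')
    (hYE : ∀ x u, YE x u = {y ∈ Y x u |
      ¬ ∃ y' ∈ Y x u, f x u y' ≤ f x u y ∧ f x u y' ≠ f x u y})
    -- the three-stage ε-constraint value
    (Fc : (Fin n → ℝ) → Fin n → X' → EReal)
    (hFc : ∀ ε j x, Fc ε j x =
      sSup ((fun u => sInf ((fun y => (f x u y j : EReal)) ''
        {y ∈ Y x u | ∀ i, i ≠ j → f x u y i ≤ ε i})) '' U))
    (ε : Fin n → ℝ) (j : Fin n) (x : X') (hx : x ∈ X)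
    -- x strictly constraint MARO-efficient for ε and j
    (heff : ¬ ∃ x' ∈ X, x' ≠ x ∧ Fc ε j x' ≤ Fc ε j x) :
    -- x strictly multi-scenario MARO-efficient for ≦^l
    ¬ ∃ x' ∈ X, x' ≠ x ∧ ∀ u ∈ U,
      ∀ b ∈ (f x u) '' (YE x u), ∃ a ∈ (f x' u) '' (YE x' u), a ≤ b := by
  rintro ⟨x', hx'X, hne, hdom⟩
  apply heff
  refine ⟨x', hx'X, hne, ?_⟩
  rw [hFc, hFc]
  -- pointwise comparison of the inner infima over each scenario u ∈ U
  apply sSup_le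
  rintro v ⟨u, huU, rfl⟩
  refine le_trans ?_ (le_sSup ⟨u, huU, rfl⟩)
  apply le_sInf
  rintro w ⟨y, ⟨hyY, hyc⟩, rfl⟩
  -- y is feasible for x; find an efficient point ye of Y(x,u) dominating it
  have hgy : Continuous fun y => f x u y := by
    have : Continuous fun y : Y' => ((x, u, y) : X' × U' × Y') := by fun_prop
    exact hf.comp this
  obtain ⟨ye, hyeY, hyele, hyeEff⟩ := maro_ext_stable (hY x u) (fun y => f x u y) hgy hyY
  have hyeE : ye ∈ YE x u := by rw [hYE]; exact ⟨hyeY, hyeEff⟩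
  -- the domination hypothesis gives an efficient point ya of Y(x',u) with f x' u ya ≤ f x u ye
  obtain ⟨a, ⟨ya, hyaE, rfl⟩, hale⟩ := hdom u huU (f x u ye) ⟨ye, hyeE, rfl⟩
  have hyaY : ya ∈ Y x' u := by rw [hYE] at hyaE; exact hyaE.1
  -- ya is feasible for x'
  have hyafeas : ya ∈ {y ∈ Y x' u | ∀ i, i ≠ j → f x' u y i ≤ ε i} :=
    ⟨hyaY, fun i hij => le_trans (le_trans (hale i) (hyele i)) (hyc i hij)⟩
  refine le_trans (sInf_le ⟨ya, hyafeas, rfl⟩) ?_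
  simp only []
  exact_mod_cast le_trans (hale j) (hyele j)
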